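/- arXiv:2604.11318 — 4 statements merged into one kernel-verified Lean document; each statement's English description precedes it below -/
import Mathlib

section
/- Let H be a finite graph with no isolated vertices, let d ≥ 1 be an integer, and let Ḧ be the 2-subdivision of H. If a graph G contains a crude d-fat model of Ḧ, then G contains a d-fat model of H. -/
open Classical

noncomputable section

namespace CoarseSep

variable {V W : Type*}

/-- Total weight of a set of vertices. -/
def wSet (w : V → NNReal) (A : Set V) : NNReal := ∑ᶠ v ∈ A, w v

/-- `u` can be reached from `v` by a walk all of whose vertices avoid `S`. -/
def ReachAvoid (G : SimpleGraph V) (S : Set V) (u v : V) : Prop :=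
  ∃ p : G.Walk u v, ∀ x ∈ p.support, x ∉ S

/-- The vertex set of the connected component of `G - S` containing `v`. -/
def componentAvoiding (G : SimpleGraph V) (S : Set V) (v : V) : Set V :=
  {u | ReachAvoid G S u v}

/-- `S` is a balanced separator of the weighted graph `(G, w)`: every connected
component of `G - S` has weight at most half the total weight. -/
def IsBalancedSeparator (G : SimpleGraph V) (w : V → NNReal) (S : Set V) : Prop :=
  ∀ v : V, v ∉ S → wSet w (componentAvoiding G S v) ≤ wSet w Set.univ / 2

/-- `S` is `(k, r)`-coverable in `G`: it is covered by at most `k` balls of radius `r`. -/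
def Coverable (G : SimpleGraph V) (S : Set V) (k : ℕ) (r : ℕ) : Prop :=
  ∃ X : Finset V, X.card ≤ k ∧ ∀ s ∈ S, ∃ x ∈ X, G.edist s x ≤ r

/-- `(k, r)`-coverability with a real number `k` of balls of radius `r`. -/
def CoverableR (G : SimpleGraph V) (S : Set V) (k : ℝ) (r : ℕ) : Prop :=
  ∃ X : Finset V, (X.card : ℝ) ≤ k ∧ ∀ s ∈ S, ∃ x ∈ X, G.edist s x ≤ r

/-- The sets `A` and `B` are at distance at least `d` in `G`. -/
def FarApart (G : SimpleGraph V) (A B : Set V) (d : ℕ) : Prop :=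
  ∀ a ∈ A, ∀ b ∈ B, (d : ℕ∞) ≤ G.edist a b

/-- `G` contains `H` as a `d`-fat minor. -/
def HasFatMinor (G : SimpleGraph V) (H : SimpleGraph W) (d : ℕ) : Prop :=
  ∃ (Bv : W → G.Subgraph) (Be : H.edgeSet → G.Subgraph),
    (∀ u, (Bv u).Connected) ∧
    (∀ e, (Be e).Connected) ∧
    (∀ (u : W) (e : H.edgeSet), u ∈ (e : Sym2 W) → ((Bv u).verts ∩ (Be e).verts).Nonempty) ∧
    (∀ u u' : W, u ≠ u' → FarApart G (Bv u).verts (Bv u').verts d) ∧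
    (∀ (u : W) (e : H.edgeSet), u ∉ (e : Sym2 W) → FarApart G (Bv u).verts (Be e).verts d) ∧
    (∀ e e' : H.edgeSet, e ≠ e' → FarApart G (Be e).verts (Be e').verts d)

/-- `H` is an induced minor of `G`. -/
def IsInducedMinor (H : SimpleGraph W) (G : SimpleGraph V) : Prop :=
  ∃ B : W → G.Subgraph,
    (∀ u, (B u).Connected) ∧
    (Pairwise fun u v => Disjoint (B u).verts (B v).verts) ∧
    (∀ u v : W, u ≠ v →
      (H.Adj u v ↔ ∃ a ∈ (B u).verts, ∃ b ∈ (B v).verts, G.Adj a b))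

/-- `H` is a minor of `G`. -/
def IsMinor (H : SimpleGraph W) (G : SimpleGraph V) : Prop :=
  ∃ B : W → G.Subgraph,
    (∀ u, (B u).Connected) ∧
    (Pairwise fun u v => Disjoint (B u).verts (B v).verts) ∧
    (∀ u v : W, H.Adj u v → ∃ a ∈ (B u).verts, ∃ b ∈ (B v).verts, G.Adj a b)

/-- The `d`-th power of `G`. -/
def power (G : SimpleGraph V) (d : ℕ) : SimpleGraph V where
  Adj u v := u ≠ v ∧ G.edist u v ≤ d
  symm := by
    constructor
    intro u v ⟨h1, h2⟩
    exact ⟨h1.symm, by rwa [SimpleGraph.edist_comm]⟩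
  loopless := ⟨fun u ⟨h, _⟩ => h rfl⟩

/-- `𝒳` is a connected partition of `G`. -/
def IsConnectedPartition (G : SimpleGraph V) (𝒳 : Set (Set V)) : Prop :=
  (∀ X ∈ 𝒳, X.Nonempty) ∧
  (⋃₀ 𝒳 = Set.univ) ∧
  (∀ X ∈ 𝒳, ∀ Y ∈ 𝒳, X ≠ Y → Disjoint X Y) ∧
  (∀ X ∈ 𝒳, (G.induce X).Connected)

/-- The quotient graph `G/𝒳`. -/
def quotientGraph (G : SimpleGraph V) (𝒳 : Set (Set V)) : SimpleGraph 𝒳 where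
  Adj X Y := X ≠ Y ∧ ∃ a ∈ (X : Set V), ∃ b ∈ (Y : Set V), G.Adj a b
  symm := by
    constructor
    rintro X Y ⟨hne, a, ha, b, hb, hab⟩
    exact ⟨hne.symm, b, hb, a, ha, hab.symm⟩
  loopless := ⟨fun X h => h.1 rfl⟩

/-- A concurrent flow: for every ordered pair of distinct vertices `u, v`,
the total flow over all `u`–`v` paths is `w u * w v`. -/
def IsConcurrentFlow (G : SimpleGraph V) (w : V → NNReal)
    (lam : ∀ u v : V, G.Path u v → NNReal) : Prop :=
  ∀ u v : V, u ≠ v → ∑ᶠ p : G.Path u v, lam u v p = w u * w v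

/-- The total amount of flow passing through the vertex `x`. -/
def flowAt (G : SimpleGraph V) (lam : ∀ u v : V, G.Path u v → NNReal) (x : V) : NNReal :=
  ∑ᶠ u : V, ∑ᶠ v : V, ∑ᶠ p : G.Path u v,
    if u ≠ v ∧ x ∈ (p : G.Walk u v).support then lam u v p else 0

/-- `(A, B)` is a separation of `G`. -/
def IsSeparation (G : SimpleGraph V) (A B : Set V) : Prop :=
  A ∪ B = Set.univ ∧ ∀ a ∈ A \ B, ∀ b ∈ B \ A, ¬ G.Adj a b

/-- `𝒳` is a star partition of `G`. -/
def IsStarPartition (G : SimpleGraph V) (𝒳 : Set (Set V)) : Prop :=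
  IsConnectedPartition G 𝒳 ∧ ∀ X ∈ 𝒳, ∃ v ∈ X, ∀ x ∈ X, x = v ∨ G.Adj v x

/-- The 2-subdivision of `H`: every edge is replaced by a path of length 3,
with one new vertex for each dart of `H`. -/
def twoSubdivision (H : SimpleGraph W) : SimpleGraph (W ⊕ H.Dart) where
  Adj x y :=
    match x, y with
    | .inl _, .inl _ => False
    | .inl u, .inr d => d.fst = u
    | .inr d, .inl u => d.fst = u
    | .inr d, .inr d' => d' = d.symm
  symm := by
    constructor
    rintro (u | d) (v | d') h
    · exact h.elim
    · exact h
    · exact h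
    · simp only at h ⊢
      subst h
      exact (SimpleGraph.Dart.symm_symm d).symm
  loopless := by
    constructor
    rintro (u | d) h
    · exact h
    · exact SimpleGraph.Dart.symm_ne d h.symm

/-- `G` contains a crude `d`-fat model of `H`. -/
def HasCrudeFatModel (G : SimpleGraph V) (H : SimpleGraph W) (d : ℕ) : Prop :=
  ∃ (φ : W → V) (π : ∀ u v : W, H.Adj u v → G.Walk (φ u) (φ v)),
    (∀ u v (h : H.Adj u v), (π u v h).IsPath) ∧
    (∀ u v u' v' (h : H.Adj u v) (h' : H.Adj u' v'),
      u ≠ u' → u ≠ v' → v ≠ u' → v ≠ v' →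
      FarApart G {x | x ∈ (π u v h).support} {x | x ∈ (π u' v' h').support} d)

lemma connected_iSup_aux {V : Type*} {G : SimpleGraph V} {ι : Type*} [Nonempty ι]
    (F : ι → G.Subgraph) (hc : ∀ i, (F i).Connected) (v : V) (hv : ∀ i, v ∈ (F i).verts) :
    (⨆ i, F i).Connected := by
  rw [SimpleGraph.Subgraph.connected_iff', SimpleGraph.connected_iff_exists_forall_reachable]
  obtain ⟨i0⟩ := ‹Nonempty ι›
  have hvmem : v ∈ (⨆ i, F i).verts := by
    rw [SimpleGraph.Subgraph.verts_iSup]; exact Set.mem_iUnion.2 ⟨i0, hv i0⟩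
  refine ⟨⟨v, hvmem⟩, ?_⟩
  rintro ⟨x, hx⟩
  rw [SimpleGraph.Subgraph.verts_iSup] at hx
  obtain ⟨i, hxi⟩ := Set.mem_iUnion.1 hx
  exact SimpleGraph.Reachable.map
    (SimpleGraph.Subgraph.inclusion (le_iSup F i)) ((hc i) ⟨v, hv i⟩ ⟨x, hxi⟩)

/-- A crude d-fat model of the 2-subdivision yields a d-fat model. -/
theorem crudeFatModel_to_fatModel (V W : Type) [Fintype V] [Fintype W]
    (G : SimpleGraph V) (H : SimpleGraph W) (d : ℕ) (hd : 1 ≤ d)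
    (hnoiso : ∀ u : W, ∃ v : W, H.Adj u v)
    (h : HasCrudeFatModel G (twoSubdivision H) d) :
    HasFatMinor G H d := by
  classical
  obtain ⟨φ, π, hpath, hfar⟩ := h
  -- adjacency of a vertex with the dart starting at it, and of a dart with its reverse
  have hadjV : ∀ d : H.Dart, (twoSubdivision H).Adj (Sum.inl d.fst) (Sum.inr d) := fun _ => rfl
  have hadjE : ∀ d : H.Dart, (twoSubdivision H).Adj (Sum.inr d) (Sum.inr d.symm) := fun _ => rfl
  -- pick a dart for each edge
  have hex : ∀ e : H.edgeSet, ∃ d : H.Dart, d.edge = (e : Sym2 W) := by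
    rintro ⟨e, he⟩
    induction e using Sym2.ind with
    | _ a b => exact ⟨⟨(a, b), he⟩, rfl⟩
  choose de hde using hex
  -- the paths
  set pV : ∀ d : H.Dart, G.Walk (φ (Sum.inl d.fst)) (φ (Sum.inr d)) :=
    fun d => π _ _ (hadjV d) with hpV
  set pE : ∀ e : H.edgeSet, G.Walk (φ (Sum.inr (de e))) (φ (Sum.inr (de e).symm)) :=
    fun e => π _ _ (hadjE (de e)) with hpE
  set Bv : W → G.Subgraph :=
    fun u => ⨆ d : {d : H.Dart // d.fst = u}, (pV d.1).toSubgraph with hBv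
  set Be : H.edgeSet → G.Subgraph := fun e => (pE e).toSubgraph with hBe
  have memBv : ∀ (u : W) (x : V),
      x ∈ (Bv u).verts ↔ ∃ d : H.Dart, d.fst = u ∧ x ∈ (pV d).support := by
    intro u x
    rw [hBv]
    rw [SimpleGraph.Subgraph.verts_iSup]
    constructor
    · intro hx
      obtain ⟨⟨dd, hdd⟩, hxd⟩ := Set.mem_iUnion.1 hx
      exact ⟨dd, hdd, (SimpleGraph.Walk.mem_verts_toSubgraph _).1 hxd⟩
    · rintro ⟨dd, hdd, hxd⟩
      exact Set.mem_iUnion.2 ⟨⟨dd, hdd⟩, (SimpleGraph.Walk.mem_verts_toSubgraph _).2 hxd⟩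
  have memBe : ∀ (e : H.edgeSet) (x : V), x ∈ (Be e).verts ↔ x ∈ (pE e).support := by
    intro e x; exact SimpleGraph.Walk.mem_verts_toSubgraph _
  -- membership of dart ends in the chosen edge
  have hfst_mem : ∀ d : H.Dart, d.fst ∈ d.edge := by
    rintro ⟨⟨a, b⟩, hab⟩; exact Sym2.mem_mk_left a b
  have hsnd_mem : ∀ d : H.Dart, d.snd ∈ d.edge := by
    rintro ⟨⟨a, b⟩, hab⟩; exact Sym2.mem_mk_right a b
  refine ⟨Bv, Be, ?_, ?_, ?_, ?_, ?_, ?_⟩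
  · -- Bv connected
    intro u
    obtain ⟨v, huv⟩ := hnoiso u
    have : Nonempty {d : H.Dart // d.fst = u} := ⟨⟨⟨(u, v), huv⟩, rfl⟩⟩
    refine connected_iSup_aux _ (fun d => (pV d.1).toSubgraph_connected) (φ (Sum.inl u)) ?_
    rintro ⟨dd, hdd⟩
    subst hdd
    exact (pV dd).start_mem_verts_toSubgraph
  · -- Be connected
    intro e
    exact (pE e).toSubgraph_connected
  · -- intersections
    intro u e hu
    have hue : u ∈ (de e).edge := by rw [hde e]; exact hu
    rcases Sym2.mem_iff.1 (by rwa [SimpleGraph.Dart.edge] at hue) with h1 | h2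
    · refine ⟨φ (Sum.inr (de e)), ?_, ?_⟩
      · rw [memBv]
        exact ⟨de e, h1.symm, (pV (de e)).end_mem_support⟩
      · rw [memBe]
        exact (pE e).start_mem_support
    · refine ⟨φ (Sum.inr (de e).symm), ?_, ?_⟩
      · rw [memBv]
        refine ⟨(de e).symm, ?_, ?_⟩
        · simpa using h2.symm
        · exact (pV (de e).symm).end_mem_support
      · rw [memBe]
        exact (pE e).end_mem_support
  · -- Bv far from Bv
    intro u u' huu' a ha b hb
    rw [memBv] at ha hb
    obtain ⟨d1, hd1, ha⟩ := ha
    obtain ⟨d2, hd2, hb⟩ := hb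
    refine hfar (Sum.inl d1.fst) (Sum.inr d1) (Sum.inl d2.fst) (Sum.inr d2)
      (hadjV d1) (hadjV d2) ?_ ?_ ?_ ?_ a ha b hb
    · intro hc; apply huu'; rw [← hd1, ← hd2]; exact Sum.inl.inj hc
    · exact fun hc => Sum.inl_ne_inr hc
    · exact fun hc => Sum.inr_ne_inl hc
    · intro hc; apply huu'; rw [← hd1, ← hd2, Sum.inr.inj hc]
  · -- Bv far from Be
    intro u e hue a ha b hb
    rw [memBv] at ha
    rw [memBe] at hb
    obtain ⟨d1, hd1, ha⟩ := ha
    have hfstne : d1.fst ≠ (de e).fst := by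
      intro hc
      apply hue
      have h2 := hfst_mem (de e)
      rw [hde e] at h2
      rwa [← hc, hd1] at h2
    have hsndne : d1.fst ≠ (de e).snd := by
      intro hc
      apply hue
      have h2 := hsnd_mem (de e)
      rw [hde e] at h2
      rwa [← hc, hd1] at h2
    refine hfar (Sum.inl d1.fst) (Sum.inr d1) (Sum.inr (de e)) (Sum.inr (de e).symm)
      (hadjV d1) (hadjE (de e)) ?_ ?_ ?_ ?_ a ha b hb
    · exact fun hc => Sum.inl_ne_inr hc
    · exact fun hc => Sum.inl_ne_inr hc
    · intro hc
      exact hfstne (by rw [Sum.inr.inj hc])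
    · intro hc
      apply hsndne
      rw [Sum.inr.inj hc]
      rfl
  · -- Be far from Be
    intro e e' hee' a ha b hb
    rw [memBe] at ha hb
    have hedgene : (de e).edge ≠ (de e').edge := by
      rw [hde e, hde e']
      exact fun hc => hee' (Subtype.ext hc)
    refine hfar (Sum.inr (de e)) (Sum.inr (de e).symm) (Sum.inr (de e')) (Sum.inr (de e').symm)
      (hadjE (de e)) (hadjE (de e')) ?_ ?_ ?_ ?_ a ha b hb
    · intro hc; exact hedgene (by rw [Sum.inr.inj hc])
    · intro hc
      apply hedgene
      rw [Sum.inr.inj hc, SimpleGraph.Dart.edge_symm]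
    · intro hc
      apply hedgene
      rw [← Sum.inr.inj hc, SimpleGraph.Dart.edge_symm]
    · intro hc
      apply hedgene
      have : de e = de e' := by
        have h2 := Sum.inr.inj hc
        have := congrArg SimpleGraph.Dart.symm h2
        simpa using this
      rw [this]

end CoarseSep
end
end

section
/- There is a universal constant C such that every n-vertex graph G with n ≥ 2 admits a star partition 𝒳 such that the quotient graph G/𝒳 has at most C · n^{4/3} · (log n)^{2/3} edges. -/
open Classical

noncomputable section

namespace CoarseSep

variable {V W : Type*}

private lemma dom_aux {V : Type} [Fintype V] (G : SimpleGraph V) (d : ℕ) :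
    ∀ (m : ℕ) (U : Finset V), U.card ≤ m → (∀ v ∈ U, d ≤ G.degree v) →
    ∃ S : Finset V, (∀ v ∈ U, v ∈ S ∨ ∃ s ∈ S, G.Adj s v) ∧
      (S.card : ℝ) * (d + 1) ≤ (Fintype.card V : ℝ) * (Real.log U.card + 1) := by
  intro m
  induction m with
  | zero =>
    intro U hU _
    refine ⟨∅, ?_, ?_⟩
    · intro v hv
      simp [Finset.card_eq_zero.mp (Nat.le_zero.mp hU)] at hv
    · simp only [Finset.card_empty, Nat.cast_zero, zero_mul]
      positivity
  | succ m ih =>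
    intro U hU hdeg
    rcases Finset.eq_empty_or_nonempty U with rfl | hUne
    · refine ⟨∅, by simp, ?_⟩
      simp only [Finset.card_empty, Nat.cast_zero, zero_mul]
      positivity
    obtain ⟨u0, hu0⟩ := hUne
    haveI : Nonempty V := ⟨u0⟩
    set n := Fintype.card V with hn
    have hnpos : 0 < n := Fintype.card_pos
    have hd1n : d + 1 ≤ n := Nat.succ_le_of_lt (lt_of_le_of_lt (hdeg u0 hu0) (G.degree_lt_card_verts u0))
    -- double counting
    have hsum : ∑ u ∈ U, (d + 1) ≤ ∑ x : V, (U.filter (fun u => u = x ∨ G.Adj x u)).card := by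
      have h1 : ∑ x : V, (U.filter (fun u => u = x ∨ G.Adj x u)).card
          = ∑ u ∈ U, (G.degree u + 1) := by
        simp_rw [Finset.card_filter]
        rw [Finset.sum_comm]
        refine Finset.sum_congr rfl fun u _ => ?_
        have : (Finset.univ.filter (fun x => u = x ∨ G.Adj x u)) = insert u (G.neighborFinset u) := by
          ext x
          simp only [Finset.mem_filter, Finset.mem_univ, true_and, Finset.mem_insert,
            SimpleGraph.mem_neighborFinset]
          constructor
          · rintro (rfl | h); exact Or.inl rfl; exact Or.inr h.symm
          · rintro (rfl | h); exact Or.inl rfl; exact Or.inr h.symm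
        calc ∑ x : V, (if u = x ∨ G.Adj x u then 1 else 0)
            = (Finset.univ.filter (fun x => u = x ∨ G.Adj x u)).card := by
              rw [Finset.card_filter]
          _ = G.degree u + 1 := by
              rw [this, Finset.card_insert_of_notMem (by simp), SimpleGraph.card_neighborFinset_eq_degree]
      rw [h1]
      exact Finset.sum_le_sum fun u hu => by have := hdeg u hu; omega
    have hcov : ∃ x : V, (d + 1) * U.card ≤ n * (U.filter (fun u => u = x ∨ G.Adj x u)).card := by
      have h2 : ∑ _x : V, (d + 1) * U.card ≤ ∑ x : V, n * (U.filter (fun u => u = x ∨ G.Adj x u)).card := by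
        have h3 : ∑ u ∈ U, (d + 1) = U.card * (d+1) := by
          rw [Finset.sum_const, smul_eq_mul]
        rw [h3] at hsum
        calc ∑ _x : V, (d + 1) * U.card = n * (U.card * (d + 1)) := by
              rw [Finset.sum_const, Finset.card_univ, ← hn, smul_eq_mul]; ring
          _ ≤ n * ∑ x : V, (U.filter (fun u => u = x ∨ G.Adj x u)).card :=
              Nat.mul_le_mul_left n hsum
          _ = ∑ x : V, n * (U.filter (fun u => u = x ∨ G.Adj x u)).card :=
              Finset.mul_sum _ _ _
      obtain ⟨x, _, hx⟩ := Finset.exists_le_of_sum_le Finset.univ_nonempty h2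
      exact ⟨x, hx⟩
    obtain ⟨x, hx⟩ := hcov
    set W := U.filter (fun u => u = x ∨ G.Adj x u) with hW
    have hWU : W ⊆ U := Finset.filter_subset _ _
    have hWpos : 0 < W.card := by
      by_contra h
      have : W.card = 0 := by omega
      rw [this, Nat.mul_zero] at hx
      have : 0 < (d + 1) * U.card := Nat.mul_pos (Nat.succ_pos d) (Finset.card_pos.mpr ⟨u0, hu0⟩)
      omega
    set U' := U \ W with hU'
    have hU'card : U'.card = U.card - W.card := Finset.card_sdiff_of_subset hWU
    have hU'lt : U'.card < U.card := by
      rw [hU'card]; have := Finset.card_le_card hWU; omega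
    have hU'm : U'.card ≤ m := by omega
    obtain ⟨S', hdom', hcard'⟩ := ih U' hU'm (fun v hv => hdeg v (Finset.mem_sdiff.mp hv).1)
    have hdomW : ∀ v ∈ W, v = x ∨ G.Adj x v := fun v hv => (Finset.mem_filter.mp hv).2
    have hUcard1 : (1:ℝ) ≤ U.card := by
      exact_mod_cast Finset.card_pos.mpr ⟨u0, hu0⟩
    rcases Finset.eq_empty_or_nonempty U' with hU'e | hU'ne
    · -- U' empty : S = {x}
      refine ⟨{x}, ?_, ?_⟩
      · intro v hv
        have hvW : v ∈ W := by
          by_contra h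
          have : v ∈ U' := Finset.mem_sdiff.mpr ⟨hv, h⟩
          rw [hU'e] at this; exact absurd this (Finset.notMem_empty v)
        rcases hdomW v hvW with rfl | h
        · exact Or.inl (Finset.mem_singleton_self v)
        · exact Or.inr ⟨x, Finset.mem_singleton_self x, h⟩
      · simp only [Finset.card_singleton, Nat.cast_one, one_mul]
        have h1 : ((d:ℝ) + 1) ≤ n := by exact_mod_cast hd1n
        have h2 : (0:ℝ) ≤ Real.log U.card := Real.log_nonneg hUcard1
        have h3 : (1:ℝ) ≤ (n:ℝ) := by exact_mod_cast hnpos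
        nlinarith
    · -- U' nonempty : S = insert x S'
      refine ⟨insert x S', ?_, ?_⟩
      · intro v hv
        by_cases hvW : v ∈ W
        · rcases hdomW v hvW with rfl | h
          · exact Or.inl (Finset.mem_insert_self v S')
          · exact Or.inr ⟨x, Finset.mem_insert_self x S', h⟩
        · rcases hdom' v (Finset.mem_sdiff.mpr ⟨hv, hvW⟩) with h | ⟨s, hs, hadj⟩
          · exact Or.inl (Finset.mem_insert_of_mem h)
          · exact Or.inr ⟨s, Finset.mem_insert_of_mem hs, hadj⟩
      · have hcardle : (insert x S').card ≤ S'.card + 1 := Finset.card_insert_le x S'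
        have hnR : (0:ℝ) < n := by exact_mod_cast hnpos
        set t : ℝ := 1 - ((d:ℝ)+1)/n with hts
        have hU'le : (U'.card : ℝ) ≤ (U.card : ℝ) * t := by
          have hWle : ((d:ℝ)+1) * U.card ≤ n * W.card := by exact_mod_cast hx
          have hcast : (U'.card : ℝ) = (U.card : ℝ) - W.card := by
            rw [hU'card]
            rw [Nat.cast_sub (Finset.card_le_card hWU)]
          rw [hcast, hts]
          have : ((d:ℝ)+1) * U.card / n ≤ W.card := by
            rw [div_le_iff₀ hnR]; nlinarith
          have hexp : (U.card : ℝ) * (1 - ((d:ℝ)+1)/n) = U.card - ((d:ℝ)+1) * U.card / n := by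
            field_simp
          rw [hexp]; linarith
        have hU'1 : (1:ℝ) ≤ U'.card := by exact_mod_cast Finset.card_pos.mpr hU'ne
        have htpos : 0 < t := by
          by_contra h
          push_neg at h
          nlinarith
        have hlog : Real.log U'.card ≤ Real.log U.card + (t - 1) := by
          calc Real.log U'.card ≤ Real.log ((U.card : ℝ) * t) :=
                Real.log_le_log (by linarith) hU'le
            _ = Real.log U.card + Real.log t := Real.log_mul (by linarith) (ne_of_gt htpos)
            _ ≤ Real.log U.card + (t - 1) := by
                linarith [Real.log_le_sub_one_of_pos htpos]
        have hB : (n:ℝ) * Real.log U'.card + ((d:ℝ)+1) ≤ (n:ℝ) * Real.log U.card := by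
          have : (n:ℝ) * (t - 1) = -(((d:ℝ)+1)) := by
            rw [hts]; field_simp; ring
          nlinarith [hlog, hnR]
        have hle : ((insert x S').card : ℝ) ≤ (S'.card : ℝ) + 1 := by exact_mod_cast hcardle
        have hd1pos : (0:ℝ) < (d:ℝ) + 1 := by positivity
        calc ((insert x S').card : ℝ) * ((d:ℝ) + 1) ≤ ((S'.card : ℝ) + 1) * ((d:ℝ)+1) := by
              nlinarith
          _ = (S'.card : ℝ) * ((d:ℝ)+1) + ((d:ℝ)+1) := by ring
          _ ≤ (n:ℝ) * (Real.log U'.card + 1) + ((d:ℝ)+1) := by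
              push_cast at hcard' ⊢; linarith
          _ = ((n:ℝ) * Real.log U'.card + ((d:ℝ)+1)) + n := by ring
          _ ≤ (n:ℝ) * Real.log U.card + n := by linarith
          _ = (n:ℝ) * (Real.log U.card + 1) := by ring


lemma exists_dominating {V : Type} [Fintype V] [Nonempty V] (G : SimpleGraph V) (d : ℕ) :
    ∃ S : Finset V, (∀ v, d ≤ G.degree v → v ∈ S ∨ ∃ s ∈ S, G.Adj s v) ∧
      (S.card : ℝ) * (d + 1) ≤ (Fintype.card V : ℝ) * (Real.log (Fintype.card V) + 1) := by
  classical
  set U := Finset.univ.filter (fun v => d ≤ G.degree v) with hU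
  obtain ⟨S, h1, h2⟩ := dom_aux G d U.card U le_rfl (fun v hv => (Finset.mem_filter.mp hv).2)
  refine ⟨S, fun v hv => h1 v (Finset.mem_filter.mpr ⟨Finset.mem_univ v, hv⟩), le_trans h2 ?_⟩
  have hn1 : (1:ℝ) ≤ (Fintype.card V : ℝ) := by exact_mod_cast Fintype.card_pos
  have hlog : Real.log U.card ≤ Real.log (Fintype.card V) := by
    rcases Nat.eq_zero_or_pos U.card with h | h
    · rw [h]
      simpa using Real.log_nonneg hn1
    · apply Real.log_le_log (by exact_mod_cast h)
      have := Finset.card_le_univ U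
      exact_mod_cast this
  have hn0 : (0:ℝ) ≤ (Fintype.card V : ℝ) := by linarith
  exact mul_le_mul_of_nonneg_left (by linarith) hn0

lemma starPartition_of_dominating {V : Type} [Fintype V] (G : SimpleGraph V) (d : ℕ)
    (S : Finset V) (hS : ∀ v, d ≤ G.degree v → v ∈ S ∨ ∃ s ∈ S, G.Adj s v) :
    ∃ 𝒳 : Set (Set V), IsStarPartition G 𝒳 ∧
      Nat.card (quotientGraph G 𝒳).edgeSet ≤ S.card * S.card + Fintype.card V * d := by
  classical
  set delta : V → V := fun v =>
    if v ∈ S then v else if h : ∃ s ∈ S, G.Adj s v then h.choose else v with hdelta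
  have hA : ∀ v, delta v = v ∨ (delta v ∈ S ∧ G.Adj (delta v) v) := by
    intro v
    rw [hdelta]
    by_cases hv : v ∈ S
    · simp [hv]
    · simp only [if_neg hv]
      by_cases h : ∃ s ∈ S, G.Adj s v
      · rw [dif_pos h]
        exact Or.inr ⟨h.choose_spec.1, h.choose_spec.2⟩
      · rw [dif_neg h]
        exact Or.inl rfl
  have hSfix : ∀ v ∈ S, delta v = v := by
    intro v hv; rw [hdelta]; simp [hv]
  have hNotS : ∀ v, delta v ∉ S → delta v = v := by
    intro v h
    rcases hA v with h1 | h1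
    · exact h1
    · exact absurd h1.1 h
  have hidem : ∀ v, delta (delta v) = delta v := by
    intro v
    by_cases h : delta v ∈ S
    · exact hSfix _ h
    · rw [hNotS v h]
      exact hNotS v h
  have hlowdeg : ∀ v, delta v = v → v ∉ S → G.degree v < d := by
    intro v hdv hvS
    by_contra hge
    push_neg at hge
    rcases hS v hge with h | hex
    · exact hvS h
    · have hmem : delta v ∈ S := by
        rw [hdelta]
        simp only [if_neg hvS, dif_pos hex]
        exact hex.choose_spec.1
      rw [hdv] at hmem
      exact hvS hmem
  have hfib : ∀ c, c ∉ S → ∀ v, delta v = c → v = c := by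
    intro c hcS v hv
    rcases hA v with h1 | h1
    · rw [← hv, h1]
    · rw [hv] at h1; exact absurd h1.1 hcS
  set 𝒳 : Set (Set V) := {X | ∃ c, delta c = c ∧ X = {v | delta v = c}} with h𝒳
  have hmemc : ∀ c, delta c = c → c ∈ {v | delta v = c} := fun c hc => hc
  have hstar : IsStarPartition G 𝒳 := by
    refine ⟨⟨?_, ?_, ?_, ?_⟩, ?_⟩
    · rintro X ⟨c, hc, rfl⟩
      exact ⟨c, hc⟩
    · ext v
      simp only [Set.mem_sUnion, Set.mem_univ, iff_true]
      exact ⟨{u | delta u = delta v}, ⟨delta v, hidem v, rfl⟩, rfl⟩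
    · rintro X ⟨c, hc, rfl⟩ Y ⟨c', hc', rfl⟩ hne
      have hcc : c ≠ c' := by
        rintro rfl; exact hne rfl
      rw [Set.disjoint_left]
      rintro v (hv : delta v = c) (hv' : delta v = c')
      exact hcc (hv ▸ hv')
    · rintro X ⟨c, hc, rfl⟩
      have hcX : c ∈ {v | delta v = c} := hc
      haveI : Nonempty ↑{v | delta v = c} := ⟨⟨c, hcX⟩⟩
      have hreach : ∀ a : {v | delta v = c},
          (G.induce {v | delta v = c}).Reachable a ⟨c, hcX⟩ := by
        rintro ⟨a, ha⟩
        rcases hA a with h1 | h1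
        · have : a = c := by rw [← ha, h1]
          subst this
          exact SimpleGraph.Reachable.refl _
        · have hadj : G.Adj a c := by
            rw [ha] at h1
            exact h1.2.symm
          exact (SimpleGraph.Adj.reachable (by exact hadj : (G.induce _).Adj ⟨a, ha⟩ ⟨c, hcX⟩))
      refine ⟨fun a b => (hreach a).trans (hreach b).symm⟩
    · rintro X ⟨c, hc, rfl⟩
      refine ⟨c, hc, fun x hx => ?_⟩
      rcases hA x with h1 | h1
      · exact Or.inl (by rw [← hx, h1])
      · exact Or.inr (by rw [hx] at h1; exact h1.2)
  -- centers
  have hcen : ∀ X : 𝒳, ∃ c, delta c = c ∧ (X : Set V) = {v | delta v = c} := fun X => X.2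
  set cen : 𝒳 → V := fun X => (hcen X).choose with hcendef
  have hcen1 : ∀ X : 𝒳, delta (cen X) = cen X := fun X => (hcen X).choose_spec.1
  have hcen2 : ∀ X : 𝒳, (X : Set V) = {v | delta v = cen X} := fun X => (hcen X).choose_spec.2
  have hceninj : Function.Injective cen := by
    intro X Y h
    apply Subtype.ext
    rw [hcen2 X, hcen2 Y, h]
  have hmapinj : Function.Injective (Sym2.map cen) := Sym2.map.injective hceninj
  -- the target finset
  set P : Finset (V × V) :=
    (S ×ˢ S) ∪ (Finset.univ.filter (fun u => G.degree u < d)).biUnion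
      (fun u => {u} ×ˢ ((G.neighborFinset u).image delta)) with hP
  have key : ∀ e ∈ (quotientGraph G 𝒳).edgeSet, ∃ p : V × V, p ∈ P ∧ Sym2.mk p.1 p.2 = Sym2.map cen e := by
    intro e he
    induction e with
    | _ X Y =>
      rw [SimpleGraph.mem_edgeSet] at he
      obtain ⟨hne, a, ha, b, hb, hab⟩ := (he : X ≠ Y ∧ ∃ a ∈ (X : Set V), ∃ b ∈ (Y : Set V), G.Adj a b)
      have hda : delta a = cen X := by have := hcen2 X ▸ ha; exact this
      have hdb : delta b = cen Y := by have := hcen2 Y ▸ hb; exact this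
      have hmap : Sym2.map cen s(X, Y) = s(cen X, cen Y) := rfl
      by_cases h1 : cen X ∈ S
      · by_cases h2 : cen Y ∈ S
        · exact ⟨(cen X, cen Y), Finset.mem_union_left _ (Finset.mem_product.mpr ⟨h1, h2⟩), rfl⟩
        · -- cen Y not in S : Y = {cen Y}, b = cen Y
          have hbY : b = cen Y := hfib _ h2 b hdb
          have hdegY : G.degree (cen Y) < d := hlowdeg _ (hcen1 Y) h2
          refine ⟨(cen Y, cen X), ?_, ?_⟩
          · apply Finset.mem_union_right
            apply Finset.mem_biUnion.mpr
            refine ⟨cen Y, Finset.mem_filter.mpr ⟨Finset.mem_univ _, hdegY⟩, ?_⟩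
            apply Finset.mem_product.mpr
            refine ⟨Finset.mem_singleton_self _, Finset.mem_image.mpr ⟨a, ?_, hda⟩⟩
            rw [SimpleGraph.mem_neighborFinset]
            rw [hbY] at hab
            exact hab.symm
          · rw [hmap, Sym2.eq_swap]
      · have haX : a = cen X := hfib _ h1 a hda
        have hdegX : G.degree (cen X) < d := hlowdeg _ (hcen1 X) h1
        refine ⟨(cen X, cen Y), ?_, rfl⟩
        apply Finset.mem_union_right
        apply Finset.mem_biUnion.mpr
        refine ⟨cen X, Finset.mem_filter.mpr ⟨Finset.mem_univ _, hdegX⟩, ?_⟩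
        apply Finset.mem_product.mpr
        refine ⟨Finset.mem_singleton_self _, Finset.mem_image.mpr ⟨b, ?_, hdb⟩⟩
        rw [SimpleGraph.mem_neighborFinset]
        rw [haX] at hab
        exact hab
  -- injection into P
  have hcard : Nat.card (quotientGraph G 𝒳).edgeSet ≤ P.card := by
    calc Nat.card (quotientGraph G 𝒳).edgeSet ≤ Nat.card {p : V × V // p ∈ P} := by
          apply Nat.card_le_card_of_injective
            (fun e : (quotientGraph G 𝒳).edgeSet =>
              (⟨(key e.1 e.2).choose, (key e.1 e.2).choose_spec.1⟩ : {p : V × V // p ∈ P}))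
          intro e e' h
          have h1 := (key e.1 e.2).choose_spec.2
          have h2 := (key e'.1 e'.2).choose_spec.2
          have h3 : (key e.1 e.2).choose = (key e'.1 e'.2).choose := congrArg Subtype.val h
          apply Subtype.ext
          apply hmapinj
          rw [← h1, ← h2, h3]
      _ = P.card := by rw [Nat.card_eq_fintype_card, Fintype.card_coe]
  have hPcard : P.card ≤ S.card * S.card + Fintype.card V * d := by
    calc P.card ≤ (S ×ˢ S).card +
        ((Finset.univ.filter (fun u => G.degree u < d)).biUnion
          (fun u => {u} ×ˢ ((G.neighborFinset u).image delta))).card := Finset.card_union_le _ _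
      _ ≤ S.card * S.card + Fintype.card V * d := by
        gcongr
        · rw [Finset.card_product]
        · calc ((Finset.univ.filter (fun u => G.degree u < d)).biUnion
              (fun u => {u} ×ˢ ((G.neighborFinset u).image delta))).card
              ≤ ∑ u ∈ Finset.univ.filter (fun u => G.degree u < d),
                  ({u} ×ˢ ((G.neighborFinset u).image delta)).card := Finset.card_biUnion_le
            _ ≤ ∑ u ∈ Finset.univ.filter (fun u => G.degree u < d), d := by
                apply Finset.sum_le_sum
                intro u hu
                rw [Finset.card_product, Finset.card_singleton, one_mul]
                calc ((G.neighborFinset u).image delta).card ≤ (G.neighborFinset u).card :=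
                      Finset.card_image_le
                  _ = G.degree u := G.card_neighborFinset_eq_degree u
                  _ ≤ d := le_of_lt (Finset.mem_filter.mp hu).2
            _ ≤ Fintype.card V * d := by
                rw [Finset.sum_const, smul_eq_mul]
                exact Nat.mul_le_mul_right d (Finset.card_filter_le _ _)
  exact ⟨𝒳, hstar, le_trans hcard hPcard⟩

/-- Star partitions with few quotient edges. -/
theorem starPartition_fewQuotientEdges :
    ∃ C : ℝ, 0 < C ∧
      ∀ (V : Type) [Fintype V] (G : SimpleGraph V), 2 ≤ Fintype.card V →
        ∃ 𝒳 : Set (Set V), IsStarPartition G 𝒳 ∧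
          (Nat.card (quotientGraph G 𝒳).edgeSet : ℝ) ≤
            C * (Fintype.card V : ℝ) ^ ((4 : ℝ) / 3) *
              Real.log (Fintype.card V) ^ ((2 : ℝ) / 3) := by
  refine ⟨10, by norm_num, ?_⟩
  intro V _ G hn2
  set nR : ℝ := (Fintype.card V : ℝ) with hnR
  have hnR2 : (2:ℝ) ≤ nR := by rw [hnR]; exact_mod_cast hn2
  have hnR0 : (0:ℝ) < nR := by linarith
  haveI : Nonempty V := Fintype.card_pos_iff.mp (by omega)
  set L : ℝ := Real.log nR with hLdef
  have hL23 : (2:ℝ)/3 ≤ L := by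
    have h1 : Real.log 2 ≤ L := Real.log_le_log (by norm_num) hnR2
    have := Real.log_two_gt_d9
    linarith
  have hLpos : (0:ℝ) < L := by linarith
  set a : ℝ := nR ^ ((1:ℝ)/3) with ha
  set b : ℝ := L ^ ((2:ℝ)/3) with hb
  have hapos : 0 < a := Real.rpow_pos_of_pos hnR0 _
  have hbpos : 0 < b := Real.rpow_pos_of_pos hLpos _
  have ha3 : a ^ (3:ℕ) = nR := by
    rw [ha, ← Real.rpow_natCast (nR ^ ((1:ℝ)/3)) 3, ← Real.rpow_mul (le_of_lt hnR0)]
    norm_num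
  have hb3 : b ^ (3:ℕ) = L ^ (2:ℕ) := by
    rw [hb, ← Real.rpow_natCast (L ^ ((2:ℝ)/3)) 3, ← Real.rpow_mul (le_of_lt hLpos)]
    norm_num
  have hna : nR * a = nR ^ ((4:ℝ)/3) := by
    rw [show (4:ℝ)/3 = 1 + 1/3 by norm_num, Real.rpow_add hnR0, Real.rpow_one]
  have habhalf : (1:ℝ)/2 ≤ a * b := by
    have hcube : ((1:ℝ)/2) ^ (3:ℕ) ≤ (a*b) ^ (3:ℕ) := by
      have : (a*b)^(3:ℕ) = nR * L^(2:ℕ) := by rw [mul_pow, ha3, hb3]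
      rw [this]
      nlinarith
    exact le_of_pow_le_pow_left₀ (by norm_num) (by positivity) hcube
  set d : ℕ := ⌈a * b⌉₊ with hd
  obtain ⟨S, hS, hScard⟩ := exists_dominating G d
  rw [← hnR, ← hLdef] at hScard
  obtain ⟨𝒳, hstar, hN⟩ := starPartition_of_dominating G d S hS
  refine ⟨𝒳, hstar, ?_⟩
  have hdub : (d:ℝ) ≤ 3 * (a*b) := by
    have h1 : (d:ℝ) < a*b + 1 := Nat.ceil_lt_add_one (by positivity)
    linarith
  have hdlb : a * b ≤ (d:ℝ) + 1 := le_trans (Nat.le_ceil _) (by rw [← hd]; linarith)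
  -- S.card bound
  have hX : (S.card:ℝ) * (a*b) ≤ nR * (L + 1) := by
    calc (S.card:ℝ) * (a*b) ≤ (S.card:ℝ) * ((d:ℝ)+1) := by
          apply mul_le_mul_of_nonneg_left hdlb (by positivity)
      _ ≤ nR * (L + 1) := hScard
  have hXsq : (S.card:ℝ)^2 ≤ 7 * nR ^ ((4:ℝ)/3) * b := by
    have hid : 7 * nR ^ ((4:ℝ)/3) * b * (a*b)^2 = 7 * nR^2 * L^2 := by
      rw [← hna]
      have : nR * a * b * (a*b)^2 = nR * (a^(3:ℕ)) * (b^(3:ℕ)) := by ring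
      calc 7 * (nR * a) * b * (a*b)^2 = 7 * (nR * (a^(3:ℕ)) * (b^(3:ℕ))) := by ring
        _ = 7 * nR^2 * L^2 := by rw [ha3, hb3]; ring
    have h0 : (L+1)^2 ≤ 7*L^2 := by nlinarith [hL23, sq_nonneg (L - 2/3)]
    have hY2 : (nR * (L+1))^2 ≤ 7 * nR^2 * L^2 := by
      calc (nR*(L+1))^2 = nR^2*(L+1)^2 := by ring
        _ ≤ nR^2*(7*L^2) := mul_le_mul_of_nonneg_left h0 (sq_nonneg nR)
        _ = 7*nR^2*L^2 := by ring
    have hsq : ((S.card:ℝ) * (a*b))^2 ≤ (nR * (L+1))^2 := by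
      apply pow_le_pow_left₀ (by positivity) hX
    have h2 : (S.card:ℝ)^2 * (a*b)^2 ≤ 7 * nR ^ ((4:ℝ)/3) * b * (a*b)^2 := by
      rw [hid]
      calc (S.card:ℝ)^2 * (a*b)^2 = ((S.card:ℝ) * (a*b))^2 := by ring
        _ ≤ (nR * (L+1))^2 := hsq
        _ ≤ 7 * nR^2 * L^2 := hY2
    have habsq : (0:ℝ) < (a*b)^2 := by positivity
    exact le_of_mul_le_mul_right h2 habsq
  have hnd : nR * (d:ℝ) ≤ 3 * nR ^ ((4:ℝ)/3) * b := by
    calc nR * (d:ℝ) ≤ nR * (3 * (a*b)) := by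
          apply mul_le_mul_of_nonneg_left hdub (le_of_lt hnR0)
      _ = 3 * (nR * a) * b := by ring
      _ = 3 * nR ^ ((4:ℝ)/3) * b := by rw [hna]
  calc ((Nat.card (quotientGraph G 𝒳).edgeSet : ℕ) : ℝ) ≤ (S.card:ℝ) * S.card + nR * d := by
        rw [hnR]; push_cast; exact_mod_cast hN
    _ ≤ 7 * nR ^ ((4:ℝ)/3) * b + 3 * nR ^ ((4:ℝ)/3) * b := by
        have : (S.card:ℝ) * S.card = (S.card:ℝ)^2 := by ring
        rw [this]
        exact add_le_add hXsq hnd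
    _ = 10 * nR ^ ((4:ℝ)/3) * b := by ring

end CoarseSep
end
end

section
/- Let H be a finite graph, let d ≥ 1 be an integer, and let G be a graph. If G excludes H as a d-fat minor, then the d-th power graph G^d excludes H as a 3-fat minor. -/
open Classical

noncomputable section

namespace CoarseSep

variable {V W : Type*}

section Aux

open SimpleGraph

variable {V : Type*} {G : SimpleGraph V}

lemma edist_getVert_left {u v : V} (p : G.Walk u v) (n : ℕ) :
    G.edist u (p.getVert n) ≤ (n : ℕ∞) := by
  induction p generalizing n with
  | nil => simp [SimpleGraph.Walk.getVert]
  | @cons a b c h q ih =>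
    cases n with
    | zero => simp [SimpleGraph.Walk.getVert]
    | succ n =>
      rw [SimpleGraph.Walk.getVert_cons_succ]
      calc G.edist a (q.getVert n) ≤ G.edist a b + G.edist b (q.getVert n) :=
            SimpleGraph.edist_triangle
        _ ≤ 1 + (n : ℕ∞) := by
            exact add_le_add (le_of_eq (SimpleGraph.edist_eq_one_iff_adj.mpr h)) (ih n)
        _ = ((n + 1 : ℕ) : ℕ∞) := by push_cast; ring

lemma edist_getVert_right {u v : V} (p : G.Walk u v) (n : ℕ) :
    G.edist (p.getVert n) v ≤ ((p.length - n : ℕ) : ℕ∞) := by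
  induction p generalizing n with
  | nil => simp [SimpleGraph.Walk.getVert]
  | @cons a b c h q ih =>
    cases n with
    | zero =>
      simp only [SimpleGraph.Walk.getVert_zero]
      calc G.edist a c ≤ G.edist a b + G.edist b c := SimpleGraph.edist_triangle
        _ ≤ 1 + (q.length : ℕ∞) := add_le_add
              (le_of_eq (SimpleGraph.edist_eq_one_iff_adj.mpr h)) (SimpleGraph.edist_le q)
        _ = (((q.cons h).length - 0 : ℕ) : ℕ∞) := by
            simp [SimpleGraph.Walk.length_cons]; ring
    | succ n =>
      rw [SimpleGraph.Walk.getVert_cons_succ]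
      refine (ih n).trans ?_
      have : q.length - n = (q.cons h).length - (n + 1) := by
        simp [SimpleGraph.Walk.length_cons]
      rw [this]

lemma power_edist_le_one (d : ℕ) {u v : V} (h : G.edist u v ≤ (d : ℕ∞)) :
    (power G d).edist u v ≤ 1 := by
  rcases eq_or_ne u v with rfl | hne
  · simp
  · exact le_of_eq (SimpleGraph.edist_eq_one_iff_adj.mpr ⟨hne, h⟩)

lemma edist_gt_of_power_three (d : ℕ) {u v : V}
    (h3 : (3 : ℕ∞) ≤ (power G d).edist u v) : ¬ (G.edist u v ≤ ((2 * d : ℕ) : ℕ∞)) := by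
  intro hle
  have hne : G.edist u v ≠ ⊤ := fun ht => by
    rw [ht] at hle
    exact (ENat.coe_ne_top (2 * d)) (top_le_iff.mp hle)
  obtain ⟨p, hp⟩ := SimpleGraph.exists_walk_of_edist_ne_top hne
  have hlen : p.length ≤ 2 * d := by
    have : (p.length : ℕ∞) ≤ ((2 * d : ℕ) : ℕ∞) := hp ▸ hle
    exact_mod_cast this
  set m := p.getVert d with hm
  have h1 : G.edist u m ≤ (d : ℕ∞) := edist_getVert_left p d
  have h2 : G.edist m v ≤ (d : ℕ∞) := by
    refine (edist_getVert_right p d).trans ?_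
    exact Nat.cast_le.mpr (by omega)
  have e1 : (power G d).edist u m ≤ 1 := power_edist_le_one d h1
  have e2 : (power G d).edist m v ≤ 1 := power_edist_le_one d h2
  have h2' : (power G d).edist u v ≤ 2 := by
    calc (power G d).edist u v ≤ (power G d).edist u m + (power G d).edist m v :=
          SimpleGraph.edist_triangle
      _ ≤ 1 + 1 := add_le_add e1 e2
      _ = 2 := by norm_num
  have : (3 : ℕ∞) ≤ 2 := h3.trans h2'
  norm_num at this

end Aux

/-- If G excludes H as a d-fat minor, then G^d excludes H as a 3-fat minor. -/
theorem power_excludes_threeFatMinor (V W : Type) [Fintype V] [Fintype W]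
    (G : SimpleGraph V) (H : SimpleGraph W) (d : ℕ) (hd : 1 ≤ d)
    (h : ¬ HasFatMinor G H d) :
    ¬ HasFatMinor (power G d) H 3 := by
  intro hFat
  apply h
  obtain ⟨Bv, Be, hBvC, hBeC, hInt, hVV, hVE, hEE⟩ := hFat
  -- choose shortest walks realizing adjacency in the power graph
  have wkex : ∀ a b : V, (power G d).Adj a b →
      ∃ p : G.Walk a b, (p.length : ℕ∞) ≤ (d : ℕ∞) := by
    intro a b hab
    have hab' : a ≠ b ∧ G.edist a b ≤ (d : ℕ∞) := hab
    have hne : G.edist a b ≠ ⊤ := fun ht => by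
      rw [ht] at hab'
      exact (ENat.coe_ne_top d) (top_le_iff.mp hab'.2)
    obtain ⟨p, hp⟩ := SimpleGraph.exists_walk_of_edist_ne_top hne
    exact ⟨p, by rw [hp]; exact hab'.2⟩
  choose wk hwk using wkex
  -- the fattening operation
  let T : (power G d).Subgraph → G.Subgraph := fun B =>
    (⨆ a ∈ B.verts, G.singletonSubgraph a) ⊔
    (⨆ q : {q : V × V // B.Adj q.1 q.2}, (wk q.1.1 q.1.2 q.2.adj_sub).toSubgraph)
  have hsingle_le : ∀ (B : (power G d).Subgraph) (a : V), a ∈ B.verts →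
      G.singletonSubgraph a ≤ T B := by
    intro B a ha
    exact le_trans (le_iSup₂ (f := fun a (_ : a ∈ B.verts) => G.singletonSubgraph a) a ha)
      le_sup_left
  have hwalk_le : ∀ (B : (power G d).Subgraph) (q : {q : V × V // B.Adj q.1 q.2}),
      (wk q.1.1 q.1.2 q.2.adj_sub).toSubgraph ≤ T B := by
    intro B q
    exact le_trans (le_iSup
      (fun q : {q : V × V // B.Adj q.1 q.2} => (wk q.1.1 q.1.2 q.2.adj_sub).toSubgraph) q)
      le_sup_right
  have hsub : ∀ (B : (power G d).Subgraph), B.verts ⊆ (T B).verts := by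
    intro B a ha
    exact SimpleGraph.Subgraph.verts_mono (hsingle_le B a ha) rfl
  -- every vertex of `T B` is within distance `⌊d/2⌋` of `B.verts`
  have hbound : ∀ (B : (power G d).Subgraph) (x : V), x ∈ (T B).verts →
      ∃ a ∈ B.verts, ∃ n : ℕ, 2 * n ≤ d ∧ G.edist x a ≤ (n : ℕ∞) := by
    intro B x hx
    rw [SimpleGraph.Subgraph.verts_sup] at hx
    rcases hx with hx | hx
    · rw [SimpleGraph.Subgraph.verts_iSup] at hx
      obtain ⟨a, hx⟩ := Set.mem_iUnion.mp hx
      rw [SimpleGraph.Subgraph.verts_iSup] at hx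
      obtain ⟨ha, hx⟩ := Set.mem_iUnion.mp hx
      have hxa : x = a := hx
      exact ⟨a, ha, 0, by omega, by simp [hxa]⟩
    · rw [SimpleGraph.Subgraph.verts_iSup] at hx
      obtain ⟨⟨⟨a, b⟩, hab⟩, hx⟩ := Set.mem_iUnion.mp hx
      set p := wk a b hab.adj_sub with hpdef
      rw [SimpleGraph.Walk.mem_verts_toSubgraph] at hx
      obtain ⟨n, hgv, hn⟩ := SimpleGraph.Walk.mem_support_iff_exists_getVert.mp hx
      have hlen : p.length ≤ d := by exact_mod_cast hwk a b hab.adj_sub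
      by_cases hc : 2 * n ≤ d
      · refine ⟨a, hab.fst_mem, n, hc, ?_⟩
        rw [SimpleGraph.edist_comm, ← hgv]
        exact edist_getVert_left p n
      · refine ⟨b, hab.snd_mem, p.length - n, by omega, ?_⟩
        rw [← hgv]
        exact edist_getVert_right p n
  -- `T B` is connected whenever `B` is
  have hTconn : ∀ B : (power G d).Subgraph, B.Connected → (T B).Connected := by
    intro B hB
    have base : ∀ (x : V) (hx : x ∈ (T B).verts),
        ∃ a, ∃ ha : a ∈ B.verts, (T B).coe.Reachable ⟨x, hx⟩ ⟨a, hsub B ha⟩ := by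
      intro x hx
      have hx' := hx
      rw [SimpleGraph.Subgraph.verts_sup] at hx'
      rcases hx' with hx' | hx'
      · rw [SimpleGraph.Subgraph.verts_iSup] at hx'
        obtain ⟨a, hx'⟩ := Set.mem_iUnion.mp hx'
        rw [SimpleGraph.Subgraph.verts_iSup] at hx'
        obtain ⟨ha, hx'⟩ := Set.mem_iUnion.mp hx'
        have hxa : x = a := hx'
        subst hxa
        exact ⟨x, ha, SimpleGraph.Reachable.refl _⟩
      · rw [SimpleGraph.Subgraph.verts_iSup] at hx'
        obtain ⟨⟨⟨a, b⟩, hab⟩, hx'⟩ := Set.mem_iUnion.mp hx'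
        set p := wk a b hab.adj_sub with hpdef
        refine ⟨a, hab.fst_mem, ?_⟩
        exact SimpleGraph.Reachable.map
          (SimpleGraph.Subgraph.inclusion (hwalk_le B ⟨⟨a, b⟩, hab⟩))
          (p.toSubgraph_connected ⟨x, hx'⟩ ⟨a, p.start_mem_verts_toSubgraph⟩)
    have key : ∀ (x y : B.verts) (p : B.coe.Walk x y),
        (T B).coe.Reachable ⟨x.1, hsub B x.2⟩ ⟨y.1, hsub B y.2⟩ := by
      intro x y p
      induction p with
      | nil => exact SimpleGraph.Reachable.refl _
      | @cons x z y hadj p ih =>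
        refine SimpleGraph.Reachable.trans ?_ ih
        have hBadj : B.Adj x.1 z.1 := hadj
        set q := wk x.1 z.1 hBadj.adj_sub with hqdef
        exact SimpleGraph.Reachable.map
          (SimpleGraph.Subgraph.inclusion (hwalk_le B ⟨⟨x.1, z.1⟩, hBadj⟩))
          (q.toSubgraph_connected ⟨x.1, q.start_mem_verts_toSubgraph⟩
            ⟨z.1, q.end_mem_verts_toSubgraph⟩)
    rw [SimpleGraph.Subgraph.connected_iff]
    constructor
    · constructor
      rintro ⟨x, hx⟩ ⟨y, hy⟩
      obtain ⟨a, ha, rx⟩ := base x hx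
      obtain ⟨b, hb, ry⟩ := base y hy
      obtain ⟨p⟩ := hB ⟨a, ha⟩ ⟨b, hb⟩
      exact rx.trans ((key ⟨a, ha⟩ ⟨b, hb⟩ p).trans ry.symm)
    · exact (hB.nonempty).mono (hsub B)
  -- far-apartness transfer
  have hFar : ∀ A B : (power G d).Subgraph,
      FarApart (power G d) A.verts B.verts 3 → FarApart G (T A).verts (T B).verts d := by
    intro A B hf x hx y hy
    obtain ⟨a, ha, n, hn, hax⟩ := hbound A x hx
    obtain ⟨b, hb, m, hm, hby⟩ := hbound B y hy
    have h3 := hf a ha b hb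
    have h2d := edist_gt_of_power_three (G := G) d h3
    by_contra hlt
    push_neg at hlt
    have hnetop : G.edist x y ≠ ⊤ := ne_top_of_lt hlt
    obtain ⟨e, he⟩ : ∃ e : ℕ, (e : ℕ∞) = G.edist x y := by
      lift G.edist x y to ℕ using hnetop with e he
      exact ⟨e, rfl⟩
    have hed : e < d := by
      rw [← he] at hlt
      exact_mod_cast hlt
    apply h2d
    calc G.edist a b ≤ G.edist a x + G.edist x b := SimpleGraph.edist_triangle
      _ ≤ G.edist a x + (G.edist x y + G.edist y b) := by
          exact add_le_add le_rfl SimpleGraph.edist_triangle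
      _ ≤ (n : ℕ∞) + ((e : ℕ∞) + (m : ℕ∞)) := by
          refine add_le_add ?_ (add_le_add ?_ hby)
          · rw [SimpleGraph.edist_comm]; exact hax
          · rw [← he]
      _ = ((n + e + m : ℕ) : ℕ∞) := by push_cast; ring
      _ ≤ ((2 * d : ℕ) : ℕ∞) := Nat.cast_le.mpr (by omega)
  refine ⟨fun u => T (Bv u), fun e => T (Be e), fun u => hTconn _ (hBvC u),
    fun e => hTconn _ (hBeC e), ?_, ?_, ?_, ?_⟩
  · intro u e hue
    obtain ⟨x, hx1, hx2⟩ := hInt u e hue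
    exact ⟨x, hsub _ hx1, hsub _ hx2⟩
  · intro u u' hne
    exact hFar _ _ (hVV u u' hne)
  · intro u e hue
    exact hFar _ _ (hVE u e hue)
  · intro e e' hne
    exact hFar _ _ (hEE e e' hne)

end CoarseSep
end
end

section
/- Let G be a weighted graph, let 𝒳 be a connected partition of G, and regard the quotient graph G/𝒳 as a weighted graph with weight function w(X) := w_G(X) for X ∈ 𝒳. Let 𝒮 ⊆ 𝒳 be a balanced separator of G/𝒳 and suppose that every cluster X ∈ 𝒳 is (q, r)-coverable in G for some q, r ∈ ℕ. Then the union S := ⋃_{X ∈ 𝒮} X is a balanced separator of G that is (q·|𝒮|, r)-coverable in G. -/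
open Classical

noncomputable section

namespace CoarseSep

variable {V W : Type*}

lemma wSet_mono' [Fintype V] (w : V → NNReal) {A B : Set V} (h : A ⊆ B) :
    wSet w A ≤ wSet w B := by
  unfold wSet
  rw [← Set.coe_toFinset A, ← Set.coe_toFinset B, finsum_mem_coe_finset,
    finsum_mem_coe_finset]
  exact Finset.sum_le_sum_of_subset (Set.toFinset_subset_toFinset.mpr h)

/-- Lifting a balanced separator through a connected partition. -/
theorem lift_separator_through_partition (V : Type) [Fintype V] (G : SimpleGraph V)
    (w : V → NNReal) (𝒳 : Set (Set V)) (h𝒳 : IsConnectedPartition G 𝒳)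
    (𝒮 : Set 𝒳) (q r : ℕ)
    (hsep : IsBalancedSeparator (quotientGraph G 𝒳)
      (fun X => wSet w (X : Set V)) 𝒮)
    (hcov : ∀ X ∈ 𝒳, Coverable G X q r) :
    IsBalancedSeparator G w (⋃ X ∈ 𝒮, (X : Set V)) ∧
      Coverable G (⋃ X ∈ 𝒮, (X : Set V)) (q * 𝒮.ncard) r := by
  classical
  obtain ⟨hne, hcover, hdisj, hconn⟩ := h𝒳
  set S : Set V := ⋃ X ∈ 𝒮, (X : Set V) with hS
  have hex : ∀ v : V, ∃ X : 𝒳, v ∈ (X : Set V) := by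
    intro v
    have hv : v ∈ ⋃₀ 𝒳 := hcover ▸ Set.mem_univ v
    obtain ⟨X, hX, hvX⟩ := hv
    exact ⟨⟨X, hX⟩, hvX⟩
  choose cl hcl using hex
  have huniq : ∀ (v : V) (X : 𝒳), v ∈ (X : Set V) → X = cl v := by
    intro v X hv
    by_contra hne'
    have hd : Disjoint (X : Set V) (cl v : Set V) :=
      hdisj _ X.2 _ (cl v).2 (fun h => hne' (Subtype.ext h))
    exact Set.disjoint_left.mp hd hv (hcl v)
  have hmemS : ∀ v : V, v ∈ S ↔ cl v ∈ 𝒮 := by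
    intro v
    constructor
    · intro hv
      simp only [hS, Set.mem_iUnion] at hv
      obtain ⟨X, hX, hvX⟩ := hv
      rwa [huniq v X hvX] at hX
    · intro h
      exact Set.mem_biUnion h (hcl v)
  have hlift : ∀ {u v : V} (p : G.Walk u v), (∀ x ∈ p.support, x ∉ S) →
      ReachAvoid (quotientGraph G 𝒳) 𝒮 (cl u) (cl v) := by
    intro u v p
    induction p with
    | @nil u' =>
      intro hp
      refine ⟨SimpleGraph.Walk.nil, ?_⟩
      intro X hX
      simp only [SimpleGraph.Walk.support_nil, List.mem_singleton] at hX
      subst hX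
      exact fun h => hp u' (by simp) ((hmemS u').mpr h)
    | @cons u a v hadj p ih =>
      intro hp
      have hp' : ∀ x ∈ p.support, x ∉ S := fun x hx => hp x (by simp [hx])
      obtain ⟨qw, hqw⟩ := ih hp'
      by_cases hc : cl u = cl a
      · rw [hc]; exact ⟨qw, hqw⟩
      · have hadjQ : (quotientGraph G 𝒳).Adj (cl u) (cl a) :=
          ⟨hc, u, hcl u, a, hcl a, hadj⟩
        refine ⟨SimpleGraph.Walk.cons hadjQ qw, ?_⟩
        intro X hX
        rw [SimpleGraph.Walk.support_cons, List.mem_cons] at hX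
        rcases hX with h | h
        · subst h
          exact fun h' => hp u (by simp) ((hmemS u).mpr h')
        · exact hqw X h
  have hbi : ∀ Q : Set 𝒳, wSet w (⋃ Y ∈ Q, (Y : Set V)) = wSet (fun X : 𝒳 => wSet w X) Q := by
    intro Q
    unfold wSet
    rw [finsum_mem_biUnion]
    · exact fun X _ Y _ hne' => hdisj _ X.2 _ Y.2 (fun h => hne' (Subtype.ext h))
    · exact Q.toFinite
    · exact fun i _ => (i : Set V).toFinite
  have htot : wSet (fun X : 𝒳 => wSet w X) Set.univ = wSet w Set.univ := by
    rw [← hbi]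
    congr 1
    rw [Set.biUnion_univ, ← Set.sUnion_eq_iUnion, hcover]
  constructor
  · intro v hv
    calc wSet w (componentAvoiding G S v)
        ≤ wSet w (⋃ Y ∈ componentAvoiding (quotientGraph G 𝒳) 𝒮 (cl v), (Y : Set V)) := by
          apply wSet_mono' w
          intro u hu
          obtain ⟨p, hp⟩ := hu
          exact Set.mem_biUnion (hlift p hp) (hcl u)
      _ = wSet (fun X : 𝒳 => wSet w X) (componentAvoiding (quotientGraph G 𝒳) 𝒮 (cl v)) :=
          hbi _
      _ ≤ wSet (fun X : 𝒳 => wSet w X) Set.univ / 2 :=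
          hsep (cl v) (fun h => hv ((hmemS v).mpr h))
      _ = wSet w Set.univ / 2 := by rw [htot]
  · choose F hFcard hFcov using fun X : 𝒳 => hcov X X.2
    have hfin : 𝒮.Finite := Set.toFinite 𝒮
    refine ⟨hfin.toFinset.biUnion F, ?_, ?_⟩
    · calc (hfin.toFinset.biUnion F).card ≤ ∑ X ∈ hfin.toFinset, (F X).card :=
            Finset.card_biUnion_le
        _ ≤ ∑ _X ∈ hfin.toFinset, q := Finset.sum_le_sum (fun X _ => hFcard X)
        _ = q * 𝒮.ncard := by
            rw [Finset.sum_const, smul_eq_mul, Set.ncard_eq_toFinset_card _ hfin, mul_comm]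
    · intro s hs
      simp only [hS, Set.mem_iUnion] at hs
      obtain ⟨X, hX, hsX⟩ := hs
      obtain ⟨x, hx, hd⟩ := hFcov X s hsX
      exact ⟨x, Finset.mem_biUnion.mpr ⟨X, hfin.mem_toFinset.mpr hX, hx⟩, hd⟩

end CoarseSep
end
end
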